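/- Under the boundedness assumption |θ_{id}| ≤ C n^{1/4 − η} for all i and d ∈ {1,2}, the regularized oracle rule δ*_ρ with f*_ρ(x1, x2) = x1 + Σ_j (θ_{j1} − x1) p_j^0(x1,x2) / (ρ + Σ_j p_j^0(x1,x2)) satisfies lim_{n→∞} [R_n(θ, δ*_ρ) − R_n(θ, δ*)] = 0, where δ* is the unregularized oracle rule. -/

import Mathlib

open MeasureTheory Real Filter

/-- Standard normal density. -/
noncomputable def gphi (x : ℝ) : ℝ := (Real.sqrt (2 * Real.pi))⁻¹ * Real.exp (-x ^ 2 / 2)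

/-- Joint density of two independent normals with means `(t1, t2)` and
standard deviations `(σ1, σ2)`. -/
noncomputable def pdens (σ1 σ2 t1 t2 x1 x2 : ℝ) : ℝ :=
  gphi ((x1 - t1) / σ1) * gphi ((x2 - t2) / σ2) / (σ1 * σ2)

/-- The unregularized oracle rule `f*`. -/
noncomputable def fstar (n : ℕ) (σ1 σ2 : ℝ) (θ : Fin n → Fin 2 → ℝ) (x1 x2 : ℝ) : ℝ :=
  (∑ j : Fin n, θ j 0 * pdens σ1 σ2 (θ j 0) (θ j 1) x1 x2) /
  (∑ j : Fin n, pdens σ1 σ2 (θ j 0) (θ j 1) x1 x2)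

/-- The regularized oracle rule `f*_ρ`. -/
noncomputable def fstarReg (n : ℕ) (σ1 σ2 ρ : ℝ) (θ : Fin n → Fin 2 → ℝ) (x1 x2 : ℝ) : ℝ :=
  x1 + (∑ j : Fin n, (θ j 0 - x1) * pdens σ1 σ2 (θ j 0) (θ j 1) x1 x2) /
    (ρ + ∑ j : Fin n, pdens σ1 σ2 (θ j 0) (θ j 1) x1 x2)

/-- Risk `R_n(θ, δ)` of the separable rule built from `f`. -/
noncomputable def riskR (n : ℕ) (σ1 σ2 : ℝ) (θ : Fin n → Fin 2 → ℝ) (f : ℝ → ℝ → ℝ) : ℝ :=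
  (n : ℝ)⁻¹ * ∑ i : Fin n, ∫ x : ℝ × ℝ,
    (θ i 0 - f x.1 x.2) ^ 2 * pdens σ1 σ2 (θ i 0) (θ i 1) x.1 x.2

noncomputable def phiS (σ u : ℝ) : ℝ := gphi (u / σ) / σ

lemma phiS_eq {σ : ℝ} (hσ : 0 < σ) (u : ℝ) :
    phiS σ u = ((Real.sqrt (2 * Real.pi))⁻¹ / σ) * Real.exp (-(1/(2*σ^2)) * u^2) := by
  unfold phiS gphi
  rw [div_pow]
  field_simp

lemma phiS_pos {σ : ℝ} (hσ : 0 < σ) (u : ℝ) : 0 < phiS σ u := by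
  rw [phiS_eq hσ]
  have : 0 < Real.sqrt (2 * Real.pi) := Real.sqrt_pos.2 (by positivity)
  positivity

lemma phiS_continuous (σ : ℝ) : Continuous (phiS σ) := by
  unfold phiS gphi
  fun_prop

lemma phiS_integrable {σ : ℝ} (hσ : 0 < σ) : Integrable (phiS σ) := by
  have := (integrable_exp_neg_mul_sq (b := 1/(2*σ^2)) (by positivity)).const_mul
    ((Real.sqrt (2 * Real.pi))⁻¹ / σ)
  exact this.congr (by filter_upwards with u; rw [phiS_eq hσ])

lemma sq_phiS_integrable {σ : ℝ} (hσ : 0 < σ) : Integrable (fun u => u^2 * phiS σ u) := by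
  have h := (integrable_rpow_mul_exp_neg_mul_sq (b := 1/(2*σ^2)) (by positivity)
    (s := 2) (by norm_num)).const_mul ((Real.sqrt (2 * Real.pi))⁻¹ / σ)
  simp_rw [show (2:ℝ) = ((2:ℕ):ℝ) by norm_num, Real.rpow_natCast] at h
  exact h.congr (by
    filter_upwards with u
    rw [phiS_eq hσ]
    ring_nf)

lemma pdens_eq (σ1 σ2 t1 t2 x1 x2 : ℝ) :
    pdens σ1 σ2 t1 t2 x1 x2 = phiS σ1 (x1 - t1) * phiS σ2 (x2 - t2) := by
  unfold pdens phiS; ring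

lemma phiS_shift_integrable {σ : ℝ} (hσ : 0 < σ) (t : ℝ) :
    Integrable (fun u => phiS σ (u - t)) :=
  (phiS_integrable hσ).comp_sub_right t

lemma sq_phiS_shift_integrable {σ : ℝ} (hσ : 0 < σ) (t : ℝ) :
    Integrable (fun u => u^2 * phiS σ (u - t)) := by
  have h : Integrable (fun v : ℝ => (2*v^2 + 2*t^2) * phiS σ v) := by
    have := ((sq_phiS_integrable hσ).const_mul 2).add ((phiS_integrable hσ).const_mul (2*t^2))
    exact this.congr (by filter_upwards with v; simp; ring)
  have h2 : Integrable (fun v : ℝ => (v + t)^2 * phiS σ v) := by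
    refine h.mono' ?_ ?_
    · exact (((continuous_id.add continuous_const).pow 2).mul (phiS_continuous σ)).aestronglyMeasurable
    · filter_upwards with v
      rw [Real.norm_eq_abs, abs_mul, abs_of_nonneg (phiS_pos hσ v).le, abs_of_nonneg (sq_nonneg _)]
      have : (v+t)^2 ≤ 2*v^2 + 2*t^2 := by nlinarith [sq_nonneg (v - t)]
      exact mul_le_mul_of_nonneg_right this (phiS_pos hσ v).le
  have := h2.comp_sub_right t
  exact this.congr (by filter_upwards with u; simp)

/-- 2-D density as product function. -/
lemma pd_prod_integrable {σ1 σ2 : ℝ} (hσ1 : 0 < σ1) (hσ2 : 0 < σ2) (t1 t2 : ℝ) :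
    Integrable (fun x : ℝ × ℝ => phiS σ1 (x.1 - t1) * phiS σ2 (x.2 - t2)) := by
  rw [Measure.volume_eq_prod]
  exact (phiS_shift_integrable hσ1 t1).mul_prod (phiS_shift_integrable hσ2 t2)

lemma sq_pd_prod_integrable {σ1 σ2 : ℝ} (hσ1 : 0 < σ1) (hσ2 : 0 < σ2) (t1 t2 : ℝ) :
    Integrable (fun x : ℝ × ℝ => x.1^2 * (phiS σ1 (x.1 - t1) * phiS σ2 (x.2 - t2))) := by
  rw [Measure.volume_eq_prod]
  have := (sq_phiS_shift_integrable hσ1 t1).mul_prod (phiS_shift_integrable hσ2 t2)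
  exact this.congr (by filter_upwards with x; ring)

lemma tailSet_meas (T : ℝ) : MeasurableSet {u : ℝ | T ≤ |u|} :=
  (isClosed_le continuous_const continuous_abs).measurableSet

/-- Tail integrals tend to zero. -/
lemma tail_tendsto {W : ℝ → ℝ} (hW : Integrable W) (hW0 : ∀ u, 0 ≤ W u) :
    Tendsto (fun T : ℕ => ∫ u, Set.indicator {u : ℝ | (T:ℝ) ≤ |u|} W u) atTop (nhds 0) := by
  have h : Tendsto (fun T : ℕ => ∫ u, Set.indicator {u : ℝ | (T:ℝ) ≤ |u|} W u) atTop
      (nhds (∫ (_u : ℝ), (0:ℝ))) := by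
    refine tendsto_integral_of_dominated_convergence W
      (fun T => hW.1.indicator (tailSet_meas _)) hW ?_ ?_
    · intro T
      filter_upwards with u
      rw [Real.norm_eq_abs, Set.indicator_apply]
      split_ifs
      · rw [abs_of_nonneg (hW0 u)]
      · simpa using hW0 u
    · filter_upwards with u
      rw [NormedAddCommGroup.tendsto_nhds_zero]
      intro ε hε
      filter_upwards [eventually_gt_atTop ⌈|u|⌉₊] with T hT
      have : ¬ ((T:ℝ) ≤ |u|) := by
        push_neg
        calc |u| ≤ (⌈|u|⌉₊ : ℝ) := Nat.le_ceil _
        _ < T := by exact_mod_cast hT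
      simp [Set.indicator_apply, this, hε]
  simpa using h

lemma quad_identity (a m G N x1 ρ : ℝ) (hG : 0 < G) (hρ : 0 < ρ)
    (hm : m = N / G) (ha : a = x1 + (N - x1*G)/(ρ+G)) :
    (a^2 - m^2)*G - 2*(a-m)*N = ρ^2 * G * (x1 - m)^2 / (ρ + G)^2 := by
  have h1 : G ≠ 0 := ne_of_gt hG
  have h2 : ρ + G ≠ 0 := by positivity
  subst hm ha
  field_simp
  ring

lemma quad_bound1 (G ρ : ℝ) (hG : 0 < G) (hρ : 0 < ρ) :
    ρ^2 * G / (ρ + G)^2 ≤ ρ/4 := by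
  rw [div_le_iff₀ (by positivity)]
  nlinarith [sq_nonneg (ρ - G)]

lemma quad_bound2 (G ρ : ℝ) (hG : 0 < G) (hρ : 0 < ρ) :
    ρ^2 * G / (ρ + G)^2 ≤ G := by
  rw [div_le_iff₀ (by positivity)]
  nlinarith [sq_nonneg ρ, sq_nonneg G, mul_pos hρ hG]

noncomputable def sqInt (σ : ℝ) : ℝ := ∫ u, u^2 * phiS σ u
noncomputable def phInt (σ : ℝ) : ℝ := ∫ u, phiS σ u
noncomputable def tailSq (σ T : ℝ) : ℝ :=
  ∫ u, Set.indicator {u : ℝ | T ≤ |u|} (fun u => u^2 * phiS σ u) u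
noncomputable def tailPh (σ T : ℝ) : ℝ :=
  ∫ u, Set.indicator {u : ℝ | T ≤ |u|} (phiS σ) u

lemma abs_sub_le' (a b : ℝ) : |a - b| ≤ |a| + |b| := (abs_sub _ _)

set_option maxHeartbeats 2000000 in
lemma main_bound {σ1 σ2 ρ : ℝ} (hσ1 : 0 < σ1) (hσ2 : 0 < σ2) (hρ : 0 < ρ)
    {n : ℕ} (hn : 0 < n) (θ : Fin n → Fin 2 → ℝ) {B T : ℝ} (hB : 0 ≤ B) (hT : 0 ≤ T)
    (hθB : ∀ i d, |θ i d| ≤ B) :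
    0 ≤ riskR n σ1 σ2 θ (fstarReg n σ1 σ2 ρ θ) - riskR n σ1 σ2 θ (fstar n σ1 σ2 θ) ∧
    riskR n σ1 σ2 θ (fstarReg n σ1 σ2 ρ θ) - riskR n σ1 σ2 θ (fstar n σ1 σ2 θ) ≤
      (ρ/4)*(3*B+T)^2*(2*(2*B+T))^2 * (n:ℝ)⁻¹ +
      (10 * phInt σ2 * tailSq σ1 T + 2 * sqInt σ1 * tailPh σ2 T
        + 8 * phInt σ1 * tailSq σ2 T) := by
  -- basic objects
  set p : Fin n → ℝ × ℝ → ℝ := fun j x => phiS σ1 (x.1 - θ j 0) * phiS σ2 (x.2 - θ j 1) with hp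
  set g : ℝ × ℝ → ℝ := fun x => ∑ j : Fin n, p j x with hg
  set Nu : ℝ × ℝ → ℝ := fun x => ∑ j : Fin n, θ j 0 * p j x with hNu
  set m : ℝ × ℝ → ℝ := fun x => Nu x / g x with hm
  set fR : ℝ × ℝ → ℝ := fun x => x.1 + (Nu x - x.1 * g x) / (ρ + g x) with hfR
  have hppos : ∀ j x, 0 < p j x := fun j x =>
    mul_pos (phiS_pos hσ1 _) (phiS_pos hσ2 _)
  have hgpos : ∀ x, 0 < g x := fun x =>
    Finset.sum_pos (fun j _ => hppos j x) ⟨⟨0, hn⟩, Finset.mem_univ _⟩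
  have hρg : ∀ x, 0 < ρ + g x := fun x => by have := hgpos x; linarith
  -- rewriting of the rules
  have hpd : ∀ (j : Fin n) (x : ℝ × ℝ),
      pdens σ1 σ2 (θ j 0) (θ j 1) x.1 x.2 = p j x := fun j x => pdens_eq _ _ _ _ _ _
  have hsub : ∀ x : ℝ × ℝ, (∑ j : Fin n, (θ j 0 - x.1) * p j x) = Nu x - x.1 * g x := by
    intro x
    simp only [sub_mul, hNu, hg, Finset.sum_sub_distrib, Finset.mul_sum]
  have hfs : ∀ x : ℝ × ℝ, fstar n σ1 σ2 θ x.1 x.2 = m x := by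
    intro x
    simp only [fstar, hpd, hm, hNu, hg]
  have hfr : ∀ x : ℝ × ℝ, fstarReg n σ1 σ2 ρ θ x.1 x.2 = fR x := by
    intro x
    simp only [fstarReg, hpd, hfR]
    rw [← hsub x]
  have hriskA : riskR n σ1 σ2 θ (fstarReg n σ1 σ2 ρ θ)
      = (n:ℝ)⁻¹ * ∑ i : Fin n, ∫ x : ℝ × ℝ, (θ i 0 - fR x)^2 * p i x := by
    simp only [riskR, hfr, hpd]
  have hriskB : riskR n σ1 σ2 θ (fstar n σ1 σ2 θ)
      = (n:ℝ)⁻¹ * ∑ i : Fin n, ∫ x : ℝ × ℝ, (θ i 0 - m x)^2 * p i x := by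
    simp only [riskR, hfs, hpd]
  -- continuity
  have hpcont : ∀ j, Continuous (p j) := fun j =>
    ((phiS_continuous σ1).comp (continuous_fst.sub continuous_const)).mul
      ((phiS_continuous σ2).comp (continuous_snd.sub continuous_const))
  have hgcont : Continuous g := continuous_finset_sum _ (fun j _ => hpcont j)
  have hNcont : Continuous Nu := continuous_finset_sum _ (fun j _ => continuous_const.mul (hpcont j))
  have hmcont : Continuous m := hNcont.div hgcont (fun x => (hgpos x).ne')
  have hfRcont : Continuous fR := continuous_fst.add
    ((hNcont.sub (continuous_fst.mul hgcont)).div (continuous_const.add hgcont)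
      (fun x => (hρg x).ne'))
  -- bounds on m and fR
  have hNuB : ∀ x, |Nu x| ≤ B * g x := by
    intro x
    calc |Nu x| ≤ ∑ j : Fin n, |θ j 0 * p j x| := Finset.abs_sum_le_sum_abs _ _
    _ ≤ ∑ j : Fin n, B * p j x := Finset.sum_le_sum (fun j _ => by
        rw [abs_mul, abs_of_pos (hppos j x)]
        exact mul_le_mul_of_nonneg_right (hθB j 0) (hppos j x).le)
    _ = B * g x := by rw [hg, Finset.mul_sum]
  have hmB : ∀ x, |m x| ≤ B := by
    intro x
    rw [hm]
    rw [abs_div, abs_of_pos (hgpos x)]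
    rw [div_le_iff₀ (hgpos x)]
    exact hNuB x
  have hfRB : ∀ x, |fR x| ≤ B + 2*|x.1| := by
    intro x
    have h1 : |Nu x - x.1 * g x| ≤ (B + |x.1|) * g x := by
      rw [← hsub x]
      calc |∑ j : Fin n, (θ j 0 - x.1) * p j x|
          ≤ ∑ j : Fin n, |(θ j 0 - x.1) * p j x| := Finset.abs_sum_le_sum_abs _ _
      _ ≤ ∑ j : Fin n, (B + |x.1|) * p j x := Finset.sum_le_sum (fun j _ => by
          rw [abs_mul, abs_of_pos (hppos j x)]
          refine mul_le_mul_of_nonneg_right ?_ (hppos j x).le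
          calc |θ j 0 - x.1| ≤ |θ j 0| + |x.1| := abs_sub_le' _ _
          _ ≤ B + |x.1| := by have := hθB j 0; linarith)
      _ = (B + |x.1|) * g x := by rw [hg, Finset.mul_sum]
    have h2 : |Nu x - x.1 * g x| / (ρ + g x) ≤ B + |x.1| := by
      rw [div_le_iff₀ (hρg x)]
      calc |Nu x - x.1 * g x| ≤ (B + |x.1|) * g x := h1
      _ ≤ (B + |x.1|) * (ρ + g x) := by
          refine mul_le_mul_of_nonneg_left (by linarith) ?_
          positivity
    calc |fR x| ≤ |x.1| + |(Nu x - x.1 * g x) / (ρ + g x)| := abs_add_le _ _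
    _ = |x.1| + |Nu x - x.1 * g x| / (ρ + g x) := by
        rw [abs_div, abs_of_pos (hρg x)]
    _ ≤ |x.1| + (B + |x.1|) := by linarith [h2]
    _ = B + 2*|x.1| := by ring
  -- integrability
  have hInt1 : ∀ i : Fin n, Integrable (fun x : ℝ × ℝ => (θ i 0 - m x)^2 * p i x) := by
    intro i
    refine ((pd_prod_integrable hσ1 hσ2 (θ i 0) (θ i 1)).const_mul ((2*B)^2)).mono' ?_ ?_
    · exact (((continuous_const.sub hmcont).pow 2).mul (hpcont i)).aestronglyMeasurable
    · filter_upwards with x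
      rw [Real.norm_eq_abs, abs_mul, abs_of_nonneg (sq_nonneg _), abs_of_pos (hppos i x)]
      refine mul_le_mul_of_nonneg_right ?_ (hppos i x).le
      have h1 : |θ i 0 - m x| ≤ 2*B := by
        calc |θ i 0 - m x| ≤ |θ i 0| + |m x| := abs_sub_le' _ _
        _ ≤ 2*B := by have := hθB i 0; have := hmB x; linarith
      have := abs_le.1 h1
      nlinarith [this.1, this.2]
  have hInt2 : ∀ i : Fin n, Integrable (fun x : ℝ × ℝ => (θ i 0 - fR x)^2 * p i x) := by
    intro i
    have hdom : Integrable (fun x : ℝ × ℝ => 8*B^2 * p i x + 8 * (x.1^2 * p i x)) :=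
      ((pd_prod_integrable hσ1 hσ2 (θ i 0) (θ i 1)).const_mul (8*B^2)).add
        ((sq_pd_prod_integrable hσ1 hσ2 (θ i 0) (θ i 1)).const_mul 8)
    refine hdom.mono' ?_ ?_
    · exact (((continuous_const.sub hfRcont).pow 2).mul (hpcont i)).aestronglyMeasurable
    · filter_upwards with x
      rw [Real.norm_eq_abs, abs_mul, abs_of_nonneg (sq_nonneg _), abs_of_pos (hppos i x)]
      have h1 : |θ i 0 - fR x| ≤ 2*B + 2*|x.1| := by
        calc |θ i 0 - fR x| ≤ |θ i 0| + |fR x| := abs_sub_le' _ _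
        _ ≤ 2*B + 2*|x.1| := by have := hθB i 0; have := hfRB x; linarith
      have h2 := abs_le.1 h1
      have h3 : (θ i 0 - fR x)^2 ≤ 8*B^2 + 8*x.1^2 := by
        have hx : |x.1|^2 = x.1^2 := sq_abs _
        nlinarith [h2.1, h2.2, sq_nonneg (B - |x.1|), abs_nonneg x.1]
      calc (θ i 0 - fR x)^2 * p i x ≤ (8*B^2 + 8*x.1^2) * p i x :=
            mul_le_mul_of_nonneg_right h3 (hppos i x).le
      _ = 8*B^2 * p i x + 8 * (x.1^2 * p i x) := by ring
  -- the difference as a single integral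
  set D : ℝ × ℝ → ℝ := fun x => ρ^2 * g x * (x.1 - m x)^2 / (ρ + g x)^2 with hD
  have key : ∀ x : ℝ × ℝ,
      (∑ i : Fin n, (θ i 0 - fR x)^2 * p i x) - (∑ i : Fin n, (θ i 0 - m x)^2 * p i x)
        = D x := by
    intro x
    have e1 : ∀ i : Fin n, ((θ i 0 - fR x)^2 * p i x - (θ i 0 - m x)^2 * p i x)
        = ((fR x)^2 - (m x)^2) * p i x - 2*(fR x - m x) * (θ i 0 * p i x) := fun i => by ring
    rw [← Finset.sum_sub_distrib, Finset.sum_congr rfl (fun i _ => e1 i),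
      Finset.sum_sub_distrib, ← Finset.mul_sum, ← Finset.mul_sum]
    exact quad_identity (fR x) (m x) (g x) (Nu x) x.1 ρ (hgpos x) hρ rfl rfl
  have hDint : Integrable D :=
    (((integrable_finset_sum _ fun i _ => hInt2 i).sub
      (integrable_finset_sum _ fun i _ => hInt1 i))).congr (Filter.Eventually.of_forall key)
  have hdiff : riskR n σ1 σ2 θ (fstarReg n σ1 σ2 ρ θ) - riskR n σ1 σ2 θ (fstar n σ1 σ2 θ)
      = (n:ℝ)⁻¹ * ∫ x : ℝ × ℝ, D x := by
    rw [hriskA, hriskB, ← mul_sub]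
    congr 1
    rw [← integral_finset_sum _ (fun i _ => hInt2 i),
      ← integral_finset_sum _ (fun i _ => hInt1 i),
      ← integral_sub (integrable_finset_sum _ fun i _ => hInt2 i)
        (integrable_finset_sum _ fun i _ => hInt1 i)]
    exact integral_congr_ae (Filter.Eventually.of_forall key)
  have hD0 : ∀ x, 0 ≤ D x := by
    intro x
    rw [hD]
    have h1 := (hgpos x).le
    have h2 := (hρg x)
    positivity
  constructor
  · rw [hdiff]
    exact mul_nonneg (by positivity) (integral_nonneg hD0)
  -- upper bound
  set a0 : ℝ := 2*B + T with ha0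
  have ha0nn : 0 ≤ a0 := by positivity
  set box : Set (ℝ × ℝ) := Set.Icc (-a0) a0 ×ˢ Set.Icc (-a0) a0 with hbox
  have hboxmeas : MeasurableSet box := measurableSet_Icc.prod measurableSet_Icc
  set F : ℝ × ℝ → ℝ := box.indicator (fun _ => (ρ/4)*(3*B+T)^2) with hF
  set S1 : Set ℝ := {u : ℝ | B + T ≤ |u|} with hS1
  have hS1meas : MeasurableSet S1 := tailSet_meas _
  set W1 : ℝ → ℝ := fun u => (2*u^2 + 8*B^2) * phiS σ1 u with hW1
  set G1 : Fin n → ℝ × ℝ → ℝ := fun j x =>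
    Set.indicator S1 W1 (x.1 - θ j 0) * phiS σ2 (x.2 - θ j 1) with hG1
  set G2 : Fin n → ℝ × ℝ → ℝ := fun j x =>
    W1 (x.1 - θ j 0) * Set.indicator S1 (phiS σ2) (x.2 - θ j 1) with hG2
  have hW1nn : ∀ u, 0 ≤ W1 u := fun u =>
    mul_nonneg (by positivity) (phiS_pos hσ1 u).le
  have hG1nn : ∀ j x, 0 ≤ G1 j x := fun j x =>
    mul_nonneg (Set.indicator_nonneg (fun u _ => hW1nn u) _) (phiS_pos hσ2 _).le
  have hG2nn : ∀ j x, 0 ≤ G2 j x := fun j x =>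
    mul_nonneg (hW1nn _) (Set.indicator_nonneg (fun u _ => (phiS_pos hσ2 u).le) _)
  -- pointwise bound
  have hsqB : ∀ (j : Fin n) x, (x.1 - m x)^2 ≤ 2*(x.1 - θ j 0)^2 + 8*B^2 := by
    intro j x
    have h1 : |θ j 0 - m x| ≤ 2*B := by
      calc |θ j 0 - m x| ≤ |θ j 0| + |m x| := abs_sub_le' _ _
      _ ≤ 2*B := by have := hθB j 0; have := hmB x; linarith
    have h2 := abs_le.1 h1
    nlinarith [h2.1, h2.2, sq_nonneg ((x.1 - θ j 0) - (θ j 0 - m x))]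
  have hptw : ∀ x, D x ≤ F x + ∑ j : Fin n, (G1 j x + G2 j x) := by
    intro x
    by_cases hx : x ∈ box
    · have hFx : F x = (ρ/4)*(3*B+T)^2 := Set.indicator_of_mem hx _
      have hDle : D x ≤ (ρ/4)*(3*B+T)^2 := by
        have hb1 := quad_bound1 (g x) ρ (hgpos x) hρ
        have hx1 : |x.1| ≤ a0 := abs_le.2 ⟨hx.1.1, hx.1.2⟩
        have hxm : |x.1 - m x| ≤ 3*B + T := by
          calc |x.1 - m x| ≤ |x.1| + |m x| := abs_sub_le' _ _
          _ ≤ 3*B + T := by have := hmB x; rw [ha0] at hx1; linarith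
        have hxm2 : (x.1 - m x)^2 ≤ (3*B+T)^2 := by
          have h2 := abs_le.1 hxm
          nlinarith [h2.1, h2.2]
        calc D x = (ρ^2 * g x / (ρ + g x)^2) * (x.1 - m x)^2 := by rw [hD]; ring
        _ ≤ (ρ/4) * (x.1 - m x)^2 := mul_le_mul_of_nonneg_right hb1 (sq_nonneg _)
        _ ≤ (ρ/4) * (3*B+T)^2 := mul_le_mul_of_nonneg_left hxm2 (by positivity)
      have hsum : 0 ≤ ∑ j : Fin n, (G1 j x + G2 j x) :=
        Finset.sum_nonneg (fun j _ => by have := hG1nn j x; have := hG2nn j x; linarith)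
      rw [hFx]; linarith
    · have hFx : F x = 0 := Set.indicator_of_notMem hx _
      have hDg : D x ≤ ∑ j : Fin n, p j x * (x.1 - m x)^2 := by
        have hb2 := quad_bound2 (g x) ρ (hgpos x) hρ
        calc D x = (ρ^2 * g x / (ρ + g x)^2) * (x.1 - m x)^2 := by rw [hD]; ring
        _ ≤ g x * (x.1 - m x)^2 := mul_le_mul_of_nonneg_right hb2 (sq_nonneg _)
        _ = ∑ j : Fin n, p j x * (x.1 - m x)^2 := by rw [hg, Finset.sum_mul]
      have hcases : x.1 ∉ Set.Icc (-a0) a0 ∨ x.2 ∉ Set.Icc (-a0) a0 := by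
        by_contra hcon
        push_neg at hcon
        exact hx (Set.mem_prod.2 ⟨hcon.1, hcon.2⟩)
      have hjj : ∀ j : Fin n, p j x * (x.1 - m x)^2 ≤ G1 j x + G2 j x := by
        intro j
        rcases hcases with hc | hc
        · have habs : a0 < |x.1| := by
            by_contra hcon
            push_neg at hcon
            have := abs_le.1 hcon
            rw [Set.mem_Icc] at hc
            exact hc ⟨this.1, this.2⟩
          have hmem : (x.1 - θ j 0) ∈ S1 := by
            rw [hS1, Set.mem_setOf_eq]
            have h1 : |x.1| - |θ j 0| ≤ |x.1 - θ j 0| := abs_sub_abs_le_abs_sub _ _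
            have := hθB j 0
            rw [ha0] at habs
            linarith
          have hG1x : G1 j x = W1 (x.1 - θ j 0) * phiS σ2 (x.2 - θ j 1) := by
            rw [hG1]; simp only [Set.indicator_of_mem hmem]
          have : p j x * (x.1 - m x)^2 ≤ G1 j x := by
            rw [hG1x]; simp only [hp, hW1]
            have := hsqB j x
            have h2 := (phiS_pos hσ1 (x.1 - θ j 0)).le
            have h3 := (phiS_pos hσ2 (x.2 - θ j 1)).le
            nlinarith [mul_nonneg h2 h3]
          have := hG2nn j x
          linarith
        · have habs : a0 < |x.2| := by
            by_contra hcon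
            push_neg at hcon
            have := abs_le.1 hcon
            rw [Set.mem_Icc] at hc
            exact hc ⟨this.1, this.2⟩
          have hmem : (x.2 - θ j 1) ∈ S1 := by
            rw [hS1, Set.mem_setOf_eq]
            have h1 : |x.2| - |θ j 1| ≤ |x.2 - θ j 1| := abs_sub_abs_le_abs_sub _ _
            have := hθB j 1
            rw [ha0] at habs
            linarith
          have hG2x : G2 j x = W1 (x.1 - θ j 0) * phiS σ2 (x.2 - θ j 1) := by
            rw [hG2]; simp only [Set.indicator_of_mem hmem]
          have : p j x * (x.1 - m x)^2 ≤ G2 j x := by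
            rw [hG2x]; simp only [hp, hW1]
            have := hsqB j x
            have h2 := (phiS_pos hσ1 (x.1 - θ j 0)).le
            have h3 := (phiS_pos hσ2 (x.2 - θ j 1)).le
            nlinarith [mul_nonneg h2 h3]
          have := hG1nn j x
          linarith
      calc D x ≤ ∑ j : Fin n, p j x * (x.1 - m x)^2 := hDg
      _ ≤ ∑ j : Fin n, (G1 j x + G2 j x) := Finset.sum_le_sum (fun j _ => hjj j)
      _ = F x + ∑ j : Fin n, (G1 j x + G2 j x) := by rw [hFx]; ring
  -- integrability of the bound
  have hW1int : Integrable W1 := by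
    have := ((sq_phiS_integrable hσ1).const_mul 2).add ((phiS_integrable hσ1).const_mul (8*B^2))
    exact this.congr (by filter_upwards with u; simp [hW1]; ring)
  have hFint : Integrable F := by
    rw [hF, integrable_indicator_iff hboxmeas]
    refine integrableOn_const (ne_of_lt ?_)
    rw [hbox, Measure.volume_eq_prod, Measure.prod_prod, Real.volume_Icc]
    exact ENNReal.mul_lt_top ENNReal.ofReal_lt_top ENNReal.ofReal_lt_top
  have hG1int : ∀ j, Integrable (G1 j) := by
    intro j
    rw [hG1, Measure.volume_eq_prod]
    exact ((hW1int.indicator hS1meas).comp_sub_right (θ j 0)).mul_prod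
      (phiS_shift_integrable hσ2 (θ j 1))
  have hG2int : ∀ j, Integrable (G2 j) := by
    intro j
    rw [hG2, Measure.volume_eq_prod]
    exact (hW1int.comp_sub_right (θ j 0)).mul_prod
      (((phiS_integrable hσ2).indicator hS1meas).comp_sub_right (θ j 1))
  have hGsum : ∀ j, Integrable (fun x : ℝ × ℝ => G1 j x + G2 j x) :=
    fun j => (hG1int j).add (hG2int j)
  have hBint : Integrable (fun x : ℝ × ℝ => F x + ∑ j : Fin n, (G1 j x + G2 j x)) :=
    hFint.add (integrable_finset_sum _ fun j _ => hGsum j)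
  -- integral of F
  have hFval : (∫ x : ℝ × ℝ, F x) = (ρ/4)*(3*B+T)^2 * (2*(2*B+T))^2 := by
    rw [hF, integral_indicator_const _ hboxmeas, smul_eq_mul]
    rw [hbox, Measure.volume_eq_prod, measureReal_def, Measure.prod_prod, Real.volume_Icc]
    rw [← ENNReal.ofReal_mul (by linarith), ENNReal.toReal_ofReal (by nlinarith)]
    rw [ha0]
    ring
  -- integral of G1 j
  have hphInt2nn : 0 ≤ phInt σ2 := integral_nonneg (fun u => (phiS_pos hσ2 u).le)
  have hphInt1nn : 0 ≤ phInt σ1 := integral_nonneg (fun u => (phiS_pos hσ1 u).le)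
  have hsqIntnn : 0 ≤ sqInt σ1 :=
    integral_nonneg (fun u => mul_nonneg (sq_nonneg _) (phiS_pos hσ1 u).le)
  have hG1val : ∀ j, (∫ x : ℝ × ℝ, G1 j x) ≤ 10 * phInt σ2 * tailSq σ1 T := by
    intro j
    simp only [hG1]
    rw [Measure.volume_eq_prod,
      integral_prod_mul (fun u => Set.indicator S1 W1 (u - θ j 0)) (fun v => phiS σ2 (v - θ j 1)),
      integral_sub_right_eq_self (fun u => Set.indicator S1 W1 u) (θ j 0),
      integral_sub_right_eq_self (fun u => phiS σ2 u) (θ j 1)]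
    have htail : (∫ u, Set.indicator S1 W1 u) ≤ 10 * tailSq σ1 T := by
      have hrhs : Integrable (fun u =>
          10 * Set.indicator {u : ℝ | T ≤ |u|} (fun u => u^2 * phiS σ1 u) u) :=
        ((sq_phiS_integrable hσ1).indicator (tailSet_meas T)).const_mul 10
      have hmono : ∀ u, Set.indicator S1 W1 u ≤
          10 * Set.indicator {u : ℝ | T ≤ |u|} (fun u => u^2 * phiS σ1 u) u := by
        intro u
        by_cases hu : u ∈ S1
        · rw [Set.indicator_of_mem hu]
          have hu2 : u ∈ {u : ℝ | T ≤ |u|} := by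
            rw [hS1, Set.mem_setOf_eq] at hu
            rw [Set.mem_setOf_eq]
            linarith
          rw [Set.indicator_of_mem hu2]
          rw [hW1]
          beta_reduce
          have hBu : B ≤ |u| := by rw [hS1, Set.mem_setOf_eq] at hu; linarith
          have hB2 : B^2 ≤ u^2 := by
            rw [← sq_abs u]
            exact pow_le_pow_left₀ hB hBu 2
          have := (phiS_pos hσ1 u).le
          nlinarith
        · rw [Set.indicator_of_notMem hu]
          exact mul_nonneg (by norm_num)
            (Set.indicator_nonneg (fun u _ => mul_nonneg (sq_nonneg _) (phiS_pos hσ1 u).le) _)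
      calc (∫ u, Set.indicator S1 W1 u)
          ≤ ∫ u, 10 * Set.indicator {u : ℝ | T ≤ |u|} (fun u => u^2 * phiS σ1 u) u :=
            integral_mono (hW1int.indicator hS1meas) hrhs hmono
      _ = 10 * tailSq σ1 T := by rw [integral_const_mul]; rfl
    have hindnn : 0 ≤ ∫ u, Set.indicator S1 W1 u :=
      integral_nonneg (Set.indicator_nonneg (fun u _ => hW1nn u))
    calc (∫ u, Set.indicator S1 W1 u) * phInt σ2
        ≤ (10 * tailSq σ1 T) * phInt σ2 := mul_le_mul_of_nonneg_right htail hphInt2nn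
    _ = 10 * phInt σ2 * tailSq σ1 T := by ring
  -- integral of G2 j
  have hG2val : ∀ j, (∫ x : ℝ × ℝ, G2 j x) ≤
      2 * sqInt σ1 * tailPh σ2 T + 8 * phInt σ1 * tailSq σ2 T := by
    intro j
    simp only [hG2]
    rw [Measure.volume_eq_prod,
      integral_prod_mul (fun u => W1 (u - θ j 0)) (fun v => Set.indicator S1 (phiS σ2) (v - θ j 1)),
      integral_sub_right_eq_self (fun u => W1 u) (θ j 0),
      integral_sub_right_eq_self (fun u => Set.indicator S1 (phiS σ2) u) (θ j 1)]
    have hW1val : (∫ u, W1 u) = 2 * sqInt σ1 + 8*B^2 * phInt σ1 := by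
      rw [hW1]
      have : (fun u => (2*u^2 + 8*B^2) * phiS σ1 u)
          = fun u => 2 * (u^2 * phiS σ1 u) + 8*B^2 * phiS σ1 u := by
        funext u; ring
      rw [this, integral_add (((sq_phiS_integrable hσ1).const_mul 2))
        ((phiS_integrable hσ1).const_mul (8*B^2)), integral_const_mul, integral_const_mul]
      rfl
    set E : ℝ := ∫ u, Set.indicator S1 (phiS σ2) u with hE
    have hEnn : 0 ≤ E :=
      integral_nonneg (Set.indicator_nonneg (fun u _ => (phiS_pos hσ2 u).le))
    have hEle : E ≤ tailPh σ2 T := by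
      refine integral_mono ((phiS_integrable hσ2).indicator hS1meas)
        ((phiS_integrable hσ2).indicator (tailSet_meas T)) ?_
      intro u
      beta_reduce
      by_cases hu : u ∈ S1
      · rw [Set.indicator_of_mem hu]
        have hu2 : u ∈ {u : ℝ | T ≤ |u|} := by
          rw [hS1, Set.mem_setOf_eq] at hu; rw [Set.mem_setOf_eq]; linarith
        rw [Set.indicator_of_mem hu2]
      · rw [Set.indicator_of_notMem hu]
        exact Set.indicator_nonneg (fun u _ => (phiS_pos hσ2 u).le) _
    have hB2E : B^2 * E ≤ tailSq σ2 T := by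
      have : B^2 * E = ∫ u, B^2 * Set.indicator S1 (phiS σ2) u := by
        rw [hE, integral_const_mul]
      rw [this]
      refine integral_mono (((phiS_integrable hσ2).indicator hS1meas).const_mul _)
        ((sq_phiS_integrable hσ2).indicator (tailSet_meas T)) ?_
      intro u
      beta_reduce
      by_cases hu : u ∈ S1
      · rw [Set.indicator_of_mem hu]
        have hu2 : u ∈ {u : ℝ | T ≤ |u|} := by
          rw [hS1, Set.mem_setOf_eq] at hu; rw [Set.mem_setOf_eq]; linarith
        rw [Set.indicator_of_mem hu2]
        have hBu : B ≤ |u| := by rw [hS1, Set.mem_setOf_eq] at hu; linarith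
        have hB2 : B^2 ≤ u^2 := by
          rw [← sq_abs u]; exact pow_le_pow_left₀ hB hBu 2
        exact mul_le_mul_of_nonneg_right hB2 (phiS_pos hσ2 u).le
      · rw [Set.indicator_of_notMem hu, mul_zero]
        exact Set.indicator_nonneg
          (fun u _ => mul_nonneg (sq_nonneg _) (phiS_pos hσ2 u).le) _
    rw [hW1val]
    calc (2 * sqInt σ1 + 8*B^2 * phInt σ1) * E
        = 2 * sqInt σ1 * E + 8 * phInt σ1 * (B^2 * E) := by ring
    _ ≤ 2 * sqInt σ1 * tailPh σ2 T + 8 * phInt σ1 * tailSq σ2 T := by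
        have t1 : 2 * sqInt σ1 * E ≤ 2 * sqInt σ1 * tailPh σ2 T :=
          mul_le_mul_of_nonneg_left hEle (by positivity)
        have t2 : 8 * phInt σ1 * (B^2 * E) ≤ 8 * phInt σ1 * tailSq σ2 T :=
          mul_le_mul_of_nonneg_left hB2E (by positivity)
        linarith
  -- combine
  have hIle : (∫ x : ℝ × ℝ, D x) ≤ (ρ/4)*(3*B+T)^2*(2*(2*B+T))^2 +
      (n:ℝ) * (10 * phInt σ2 * tailSq σ1 T + 2 * sqInt σ1 * tailPh σ2 T
        + 8 * phInt σ1 * tailSq σ2 T) := by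
    calc (∫ x : ℝ × ℝ, D x)
        ≤ ∫ x : ℝ × ℝ, (F x + ∑ j : Fin n, (G1 j x + G2 j x)) :=
          integral_mono hDint hBint hptw
    _ = (∫ x : ℝ × ℝ, F x) + ∑ j : Fin n, ((∫ x : ℝ × ℝ, G1 j x) + ∫ x : ℝ × ℝ, G2 j x) := by
        rw [integral_add hFint (integrable_finset_sum _ fun j _ => hGsum j),
          integral_finset_sum _ (fun j _ => hGsum j)]
        congr 1
        exact Finset.sum_congr rfl (fun j _ => integral_add (hG1int j) (hG2int j))
    _ ≤ (ρ/4)*(3*B+T)^2*(2*(2*B+T))^2 +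
        ∑ j : Fin n, (10 * phInt σ2 * tailSq σ1 T + (2 * sqInt σ1 * tailPh σ2 T
          + 8 * phInt σ1 * tailSq σ2 T)) := by
        rw [hFval]
        refine add_le_add le_rfl (Finset.sum_le_sum (fun j _ => ?_))
        have := hG1val j
        have := hG2val j
        linarith
    _ = (ρ/4)*(3*B+T)^2*(2*(2*B+T))^2 +
        (n:ℝ) * (10 * phInt σ2 * tailSq σ1 T + 2 * sqInt σ1 * tailPh σ2 T
          + 8 * phInt σ1 * tailSq σ2 T) := by
        rw [Finset.sum_const, Finset.card_univ, Fintype.card_fin, nsmul_eq_mul]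
        ring
  rw [hdiff]
  have hnpos : (0:ℝ) < (n:ℝ) := Nat.cast_pos.2 hn
  have htS1 : 0 ≤ tailSq σ1 T := integral_nonneg
    (fun u => Set.indicator_nonneg (fun v _ => mul_nonneg (sq_nonneg _) (phiS_pos hσ1 v).le) u)
  have htS2 : 0 ≤ tailSq σ2 T := integral_nonneg
    (fun u => Set.indicator_nonneg (fun v _ => mul_nonneg (sq_nonneg _) (phiS_pos hσ2 v).le) u)
  have htP2 : 0 ≤ tailPh σ2 T := integral_nonneg
    (fun u => Set.indicator_nonneg (fun v _ => (phiS_pos hσ2 v).le) u)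
  have hK : 0 ≤ 10 * phInt σ2 * tailSq σ1 T + 2 * sqInt σ1 * tailPh σ2 T
      + 8 * phInt σ1 * tailSq σ2 T := by positivity
  calc (n:ℝ)⁻¹ * ∫ x : ℝ × ℝ, D x
      ≤ (n:ℝ)⁻¹ * ((ρ/4)*(3*B+T)^2*(2*(2*B+T))^2 +
        (n:ℝ) * (10 * phInt σ2 * tailSq σ1 T + 2 * sqInt σ1 * tailPh σ2 T
          + 8 * phInt σ1 * tailSq σ2 T)) :=
        mul_le_mul_of_nonneg_left hIle (by positivity)
  _ = (ρ/4)*(3*B+T)^2*(2*(2*B+T))^2 * (n:ℝ)⁻¹ +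
      ((n:ℝ)⁻¹ * (n:ℝ)) * (10 * phInt σ2 * tailSq σ1 T + 2 * sqInt σ1 * tailPh σ2 T
        + 8 * phInt σ1 * tailSq σ2 T) := by ring
  _ = _ := by rw [inv_mul_cancel₀ hnpos.ne']; ring

lemma rpow_neg_nat_tendsto {c : ℝ} (hc : 0 < c) :
    Tendsto (fun n : ℕ => (n:ℝ) ^ (-c)) atTop (nhds 0) :=
  (tendsto_rpow_neg_atTop hc).comp tendsto_natCast_atTop_atTop


/-- Under `|θ_{id}| ≤ C n^{1/4 − η}`, the regularized oracle rule `δ*_ρ` satisfies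
`lim_{n→∞} [R_n(θ, δ*_ρ) − R_n(θ, δ*)] = 0`. -/
theorem stmt5 (σ1 σ2 ρ C η : ℝ) (hσ1 : 0 < σ1) (hσ2 : 0 < σ2) (hρ : 0 < ρ)
    (hC : 0 < C) (hη : 0 < η)
    (θ : (n : ℕ) → Fin n → Fin 2 → ℝ)
    (hθ : ∀ (n : ℕ) (i : Fin n) (d : Fin 2),
      |θ n i d| ≤ C * (n : ℝ) ^ ((1 : ℝ) / 4 - η)) :
    Tendsto (fun n : ℕ =>
        riskR n σ1 σ2 (θ n) (fstarReg n σ1 σ2 ρ (θ n)) -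
          riskR n σ1 σ2 (θ n) (fstar n σ1 σ2 (θ n)))
      atTop (nhds 0) := by
  set B : ℕ → ℝ := fun n => C * (n:ℝ) ^ ((1:ℝ)/4 - η) with hBdef
  have hBnn : ∀ n, 0 ≤ B n := fun n =>
    mul_nonneg hC.le (Real.rpow_nonneg (Nat.cast_nonneg n) _)
  set K : ℕ → ℝ := fun T => 10 * phInt σ2 * tailSq σ1 T + 2 * sqInt σ1 * tailPh σ2 T
      + 8 * phInt σ1 * tailSq σ2 T with hKdef
  have hKto : Tendsto K atTop (nhds 0) := by
    have h1 := tail_tendsto (sq_phiS_integrable hσ1)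
      (fun u => mul_nonneg (sq_nonneg _) (phiS_pos hσ1 u).le)
    have h2 := tail_tendsto (phiS_integrable hσ2) (fun u => (phiS_pos hσ2 u).le)
    have h3 := tail_tendsto (sq_phiS_integrable hσ2)
      (fun u => mul_nonneg (sq_nonneg _) (phiS_pos hσ2 u).le)
    have := ((h1.const_mul (10 * phInt σ2)).add (h2.const_mul (2 * sqInt σ1))).add
      (h3.const_mul (8 * phInt σ1))
    simpa [hKdef, tailSq, tailPh, mul_comm] using this
  rw [NormedAddCommGroup.tendsto_nhds_zero]
  intro ε hε
  have hε2 : (0:ℝ) < ε/2 := by linarith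
  obtain ⟨T, hTK⟩ : ∃ T : ℕ, ‖K T‖ < ε/2 := by
    rw [NormedAddCommGroup.tendsto_nhds_zero] at hKto
    exact (hKto (ε/2) hε2).exists
  have hKTle : K T ≤ ε/2 := le_trans (le_abs_self _) (le_of_lt hTK)
  -- the bulk term tends to zero
  set A : ℕ → ℝ := fun n => (ρ/4)*(3*B n+(T:ℝ))^2*(2*(2*B n+(T:ℝ)))^2 * (n:ℝ)⁻¹ with hAdef
  have hAto : Tendsto A atTop (nhds 0) := by
    set u : ℕ → ℝ := fun n => (3*B n+(T:ℝ)) * (n:ℝ) ^ (-(1:ℝ)/4) with hudef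
    set v : ℕ → ℝ := fun n => (2*B n+(T:ℝ)) * (n:ℝ) ^ (-(1:ℝ)/4) with hvdef
    have hA_eq : ∀ᶠ n : ℕ in atTop, A n = (ρ/4) * (u n)^2 * (2 * v n)^2 := by
      filter_upwards [eventually_gt_atTop 0] with n hn
      have hnp : (0:ℝ) < (n:ℝ) := Nat.cast_pos.2 hn
      have hr : ((n:ℝ) ^ (-(1:ℝ)/4))^2 * ((n:ℝ) ^ (-(1:ℝ)/4))^2 = (n:ℝ)⁻¹ := by
        have h4 : ((n:ℝ)^(-(1:ℝ)/4))^2 * ((n:ℝ)^(-(1:ℝ)/4))^2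
            = ((n:ℝ)^(-(1:ℝ)/4))^(4:ℕ) := by ring
        rw [h4, ← Real.rpow_natCast ((n:ℝ) ^ (-(1:ℝ)/4)) 4, ← Real.rpow_mul hnp.le]
        norm_num
        rw [Real.rpow_neg_one]
      rw [hAdef, hudef, hvdef]
      simp only
      calc (ρ/4)*(3*B n+(T:ℝ))^2*(2*(2*B n+(T:ℝ)))^2 * (n:ℝ)⁻¹
          = (ρ/4)*(3*B n+(T:ℝ))^2*(2*(2*B n+(T:ℝ)))^2 *
            (((n:ℝ) ^ (-(1:ℝ)/4))^2 * ((n:ℝ) ^ (-(1:ℝ)/4))^2) := by rw [hr]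
      _ = (ρ/4) * ((3*B n+(T:ℝ)) * (n:ℝ) ^ (-(1:ℝ)/4))^2 *
            (2 * ((2*B n+(T:ℝ)) * (n:ℝ) ^ (-(1:ℝ)/4)))^2 := by ring
    have hBrp : Tendsto (fun n : ℕ => B n * (n:ℝ) ^ (-(1:ℝ)/4)) atTop (nhds 0) := by
      have heq : ∀ᶠ n : ℕ in atTop, C * (n:ℝ) ^ (-η) = B n * (n:ℝ) ^ (-(1:ℝ)/4) := by
        filter_upwards [eventually_gt_atTop 0] with n hn
        have hnp : (0:ℝ) < (n:ℝ) := Nat.cast_pos.2 hn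
        rw [hBdef]
        simp only
        rw [mul_assoc, ← Real.rpow_add hnp]
        ring_nf
      have := (rpow_neg_nat_tendsto hη).const_mul C
      rw [mul_zero] at this
      exact Tendsto.congr' heq this
    have hTrp : Tendsto (fun n : ℕ => (T:ℝ) * (n:ℝ) ^ (-(1:ℝ)/4)) atTop (nhds 0) := by
      have := (rpow_neg_nat_tendsto (by norm_num : (0:ℝ) < 1/4)).const_mul (T:ℝ)
      rw [mul_zero] at this
      refine this.congr (fun n => by norm_num)
    have hu0 : Tendsto u atTop (nhds 0) := by
      have := ((hBrp.const_mul 3).add hTrp)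
      rw [mul_zero, add_zero] at this
      exact this.congr (fun n => by rw [hudef]; simp only; ring)
    have hv0 : Tendsto v atTop (nhds 0) := by
      have := ((hBrp.const_mul 2).add hTrp)
      rw [mul_zero, add_zero] at this
      exact this.congr (fun n => by rw [hvdef]; simp only; ring)
    have hlim : Tendsto (fun n : ℕ => (ρ/4) * (u n)^2 * (2 * v n)^2) atTop
        (nhds ((ρ/4) * (0:ℝ)^2 * (2*(0:ℝ))^2)) :=
      (tendsto_const_nhds.mul (hu0.pow 2)).mul ((tendsto_const_nhds.mul hv0).pow 2)
    rw [show (ρ/4) * (0:ℝ)^2 * (2*(0:ℝ))^2 = 0 by norm_num] at hlim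
    exact Tendsto.congr' (hA_eq.mono fun n h => h.symm) hlim
  have hAev : ∀ᶠ n : ℕ in atTop, |A n| < ε/2 := by
    rw [NormedAddCommGroup.tendsto_nhds_zero] at hAto
    exact hAto (ε/2) hε2
  filter_upwards [hAev, eventually_gt_atTop 0] with n hAn hn
  have hmb := main_bound hσ1 hσ2 hρ hn (θ n) (hBnn n) (Nat.cast_nonneg T)
    (fun i d => hθ n i d)
  rw [Real.norm_eq_abs, abs_of_nonneg hmb.1]
  calc riskR n σ1 σ2 (θ n) (fstarReg n σ1 σ2 ρ (θ n)) -
        riskR n σ1 σ2 (θ n) (fstar n σ1 σ2 (θ n))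
      ≤ A n + K T := hmb.2
  _ < ε/2 + ε/2 := by
      have := le_abs_self (A n)
      linarith [hKTle, lt_of_le_of_lt (le_abs_self (A n)) hAn]
  _ = ε := by ring
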